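/- Let K be a field with algebraic closure K̄, let d ≥ 1, and let p, q ∈ K[X₁,…,X_d] with q ≠ 0. Let q = c·q₁^{e₁}⋯q_m^{e_m} be the factorization of q into a unit c and pairwise non-associate irreducible polynomials q₁,…,q_m with positive exponents e₁,…,e_m. Then the rational function f = p/q ∈ K(X₁,…,X_d) can be written as f = Σ_A p_A / ∏_{i∈A} q_i^{e_i}, where the sum ranges over subsets A ⊆ {1,…,m} such that the polynomials q_i for i ∈ A have a common zero in K̄^d, and each p_A ∈ K[X₁,…,X_d] (possibly zero). -/

import Mathlib

open MvPolynomial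

/-- Any proper ideal of `K[X₁,…,X_d]` has a common zero in the algebraic closure of `K`. -/
lemma point_of_proper_ideal {K : Type*} [Field K] {d : ℕ}
    (I : Ideal (MvPolynomial (Fin d) K)) (hI : I ≠ ⊤) :
    ∃ x : Fin d → AlgebraicClosure K, ∀ f ∈ I,
      MvPolynomial.eval x (MvPolynomial.map (algebraMap K (AlgebraicClosure K)) f) = 0 := by
  obtain ⟨M, hM, hIM⟩ := Ideal.exists_le_maximal I hI
  letI : Field (MvPolynomial (Fin d) K ⧸ M) := Ideal.Quotient.field M
  haveI : Algebra.IsIntegral K (MvPolynomial (Fin d) K ⧸ M) := by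
    constructor
    intro x
    have h := MvPolynomial.quotient_mk_comp_C_isIntegral_of_isJacobsonRing M x
    exact h
  haveI : Algebra.IsAlgebraic K (MvPolynomial (Fin d) K ⧸ M) :=
    Algebra.IsIntegral.isAlgebraic
  haveI : NoZeroSMulDivisors K (MvPolynomial (Fin d) K ⧸ M) :=
    inferInstance
  let φ : (MvPolynomial (Fin d) K ⧸ M) →ₐ[K] AlgebraicClosure K := IsAlgClosed.lift
  let ψ : MvPolynomial (Fin d) K →ₐ[K] AlgebraicClosure K :=
    φ.comp (Ideal.Quotient.mkₐ K M)
  refine ⟨fun i => ψ (X i), fun f hf => ?_⟩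
  have h1 : MvPolynomial.eval (fun i => ψ (X i))
      (MvPolynomial.map (algebraMap K (AlgebraicClosure K)) f) = ψ f := by
    rw [MvPolynomial.eval_map]
    have := MvPolynomial.aeval_unique ψ
    conv_rhs => rw [this]
    rfl
  rw [h1]
  show φ (Ideal.Quotient.mkₐ K M f) = 0
  have : Ideal.Quotient.mkₐ K M f = 0 := by
    simpa [Ideal.Quotient.eq_zero_iff_mem] using hIM hf
  rw [this, map_zero]

/-- If the `qi i`, `i ∈ B`, have no common zero in the algebraic closure, then the
`qi i ^ e i`, `i ∈ B`, generate the unit ideal. -/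
lemma bezout_of_no_common_zero {K : Type*} [Field K] {d m : ℕ}
    (qi : Fin m → MvPolynomial (Fin d) K) (e : Fin m → ℕ) (he : ∀ i, 0 < e i)
    (B : Finset (Fin m))
    (hbad : ¬ ∃ x : Fin d → AlgebraicClosure K, ∀ i ∈ B,
      MvPolynomial.eval x (MvPolynomial.map (algebraMap K (AlgebraicClosure K)) (qi i)) = 0) :
    ∃ a : Fin m → MvPolynomial (Fin d) K, ∑ i ∈ B, a i * qi i ^ e i = 1 := by
  set v : B → MvPolynomial (Fin d) K := fun i => qi i ^ e i with hv
  have htop : Ideal.span (Set.range v) = ⊤ := by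
    by_contra h
    obtain ⟨x, hx⟩ := point_of_proper_ideal _ h
    apply hbad
    refine ⟨x, fun i hi => ?_⟩
    have := hx (v ⟨i, hi⟩) (Ideal.subset_span ⟨⟨i, hi⟩, rfl⟩)
    simp only [hv, map_pow] at this
    exact pow_eq_zero_iff (he i).ne' |>.mp this
  have h1 : (1 : MvPolynomial (Fin d) K) ∈ Ideal.span (Set.range v) :=
    htop ▸ Submodule.mem_top
  rw [Ideal.mem_span_range_iff_exists_fun] at h1
  obtain ⟨c, hc⟩ := h1
  classical
  refine ⟨fun i => if h : i ∈ B then c ⟨i, h⟩ else 0, ?_⟩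
  rw [← hc, ← Finset.sum_attach B fun i => (if h : i ∈ B then c ⟨i, h⟩ else 0) * qi i ^ e i]
  apply Finset.sum_congr rfl
  intro i _
  rw [dif_pos i.2]

/-- The inductive decomposition underlying the Nullstellensatz decomposition. -/
lemma decomp_aux {K : Type*} [Field K] {d m : ℕ}
    (qi : Fin m → MvPolynomial (Fin d) K) (e : Fin m → ℕ)
    (hirr : ∀ i, Irreducible (qi i)) (he : ∀ i, 0 < e i)
    (B : Finset (Fin m)) :
    ∀ p : MvPolynomial (Fin d) K,
    ∃ P : Finset (Fin m) → MvPolynomial (Fin d) K,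
      (∀ A, P A ≠ 0 →
        ∃ x : Fin d → AlgebraicClosure K, ∀ i ∈ A,
          MvPolynomial.eval x
            (MvPolynomial.map (algebraMap K (AlgebraicClosure K)) (qi i)) = 0) ∧
      algebraMap (MvPolynomial (Fin d) K) (FractionRing (MvPolynomial (Fin d) K)) p /
          algebraMap (MvPolynomial (Fin d) K) (FractionRing (MvPolynomial (Fin d) K))
            (∏ i ∈ B, qi i ^ e i) =
        ∑ A : Finset (Fin m),
          algebraMap (MvPolynomial (Fin d) K) (FractionRing (MvPolynomial (Fin d) K)) (P A) /
            algebraMap (MvPolynomial (Fin d) K) (FractionRing (MvPolynomial (Fin d) K))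
              (∏ i ∈ A, qi i ^ e i) := by
  classical
  set ι := algebraMap (MvPolynomial (Fin d) K) (FractionRing (MvPolynomial (Fin d) K)) with hι
  have hne : ∀ r : MvPolynomial (Fin d) K, r ≠ 0 → ι r ≠ 0 := fun r hr h =>
    hr ((IsFractionRing.to_map_eq_zero_iff
      (K := FractionRing (MvPolynomial (Fin d) K))).mp h)
  have hprodne : ∀ C : Finset (Fin m), (∏ i ∈ C, qi i ^ e i) ≠ 0 := by
    intro C
    exact Finset.prod_ne_zero_iff.mpr fun i _ => pow_ne_zero _ (hirr i).ne_zero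
  induction B using Finset.strongInduction with
  | _ B ih =>
  intro p
  by_cases hgood : ∃ x : Fin d → AlgebraicClosure K, ∀ i ∈ B,
      MvPolynomial.eval x (MvPolynomial.map (algebraMap K (AlgebraicClosure K)) (qi i)) = 0
  · set P : Finset (Fin m) → MvPolynomial (Fin d) K :=
      fun A => if A = B then p else 0 with hP
    refine ⟨P, ?_, ?_⟩
    · intro A hA
      have : A = B := by
        by_contra h
        exact hA (by simp [hP, if_neg h])
      exact this ▸ hgood
    · rw [Finset.sum_eq_single B]
      · simp [hP]
      · intro A _ hA
        simp [hP, if_neg hA]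
      · intro h; exact absurd (Finset.mem_univ B) h
  · obtain ⟨a, ha⟩ := bezout_of_no_common_zero qi e he B hgood
    have H : ∀ i : {x // x ∈ B}, ∃ P : Finset (Fin m) → MvPolynomial (Fin d) K,
        (∀ A, P A ≠ 0 →
          ∃ x : Fin d → AlgebraicClosure K, ∀ j ∈ A,
            MvPolynomial.eval x
              (MvPolynomial.map (algebraMap K (AlgebraicClosure K)) (qi j)) = 0) ∧
        ι (a i * p) / ι (∏ j ∈ B.erase i, qi j ^ e j) =
          ∑ A : Finset (Fin m), ι (P A) / ι (∏ j ∈ A, qi j ^ e j) :=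
      fun i => ih (B.erase i) (Finset.erase_ssubset i.2) (a i * p)
    choose Pf hg hqe using H
    set P : Finset (Fin m) → MvPolynomial (Fin d) K :=
      fun A => ∑ i ∈ B.attach, Pf i A with hP
    refine ⟨P, ?_, ?_⟩
    · intro A hA
      rw [hP] at hA
      obtain ⟨i, _, hi⟩ := Finset.exists_ne_zero_of_sum_ne_zero hA
      exact hg i A hi
    · have key : ∀ i : {x // x ∈ B},
          ι (a i * p) / ι (∏ j ∈ B.erase i, qi j ^ e j) =
          ι (a i * p * qi i ^ e i) / ι (∏ j ∈ B, qi j ^ e j) := by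
        intro i
        rw [div_eq_div_iff (hne _ (by
            have := hprodne B
            intro h
            exact this (by
              rw [← Finset.mul_prod_erase B (fun j => qi j ^ e j) i.2, h, mul_zero])))
          (hne _ (hprodne B)), ← map_mul, ← map_mul]
        congr 1
        rw [← Finset.mul_prod_erase B (fun j => qi j ^ e j) i.2]
        ring
      calc ι p / ι (∏ i ∈ B, qi i ^ e i)
          = ι (∑ i ∈ B.attach, a i * p * qi i ^ e i) / ι (∏ i ∈ B, qi i ^ e i) := by
            congr 2
            rw [Finset.sum_attach B (fun i => a i * p * qi i ^ e i)]
            have h2 : ∑ i ∈ B, a i * p * qi i ^ e i = p * ∑ i ∈ B, a i * qi i ^ e i := by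
              rw [Finset.mul_sum]; exact Finset.sum_congr rfl fun i _ => by ring
            rw [h2, ha, mul_one]
        _ = ∑ i ∈ B.attach, ι (a i * p * qi i ^ e i) / ι (∏ j ∈ B, qi j ^ e j) := by
            rw [map_sum, Finset.sum_div]
        _ = ∑ i ∈ B.attach, ι (a i * p) / ι (∏ j ∈ B.erase i, qi j ^ e j) :=
            Finset.sum_congr rfl fun i _ => (key i).symm
        _ = ∑ i ∈ B.attach, ∑ A : Finset (Fin m), ι (Pf i A) / ι (∏ j ∈ A, qi j ^ e j) :=
            Finset.sum_congr rfl fun i _ => hqe i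
        _ = ∑ A : Finset (Fin m), ι (P A) / ι (∏ i ∈ A, qi i ^ e i) := by
            rw [Finset.sum_comm]
            refine Finset.sum_congr rfl fun A _ => ?_
            rw [hP]
            rw [map_sum, Finset.sum_div]

/-- **Nullstellensatz decomposition** (Lemma 3).
Let `q = c · q₁^{e₁} ⋯ q_m^{e_m}` be the factorization of `q ≠ 0` into a unit and
pairwise non-associate irreducibles.  Then `p/q` can be written as
`Σ_A p_A / ∏_{i∈A} q_i^{e_i}`, the sum over subsets `A ⊆ {1,…,m}` such that the
`q_i`, `i ∈ A`, have a common zero in `K̄^d`. -/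
theorem nullstellensatz_decomposition {K : Type*} [Field K] {d m : ℕ} (hd : 1 ≤ d)
    (p q : MvPolynomial (Fin d) K) (hq : q ≠ 0)
    (c : MvPolynomial (Fin d) K) (hc : IsUnit c)
    (qi : Fin m → MvPolynomial (Fin d) K) (e : Fin m → ℕ)
    (hirr : ∀ i, Irreducible (qi i)) (he : ∀ i, 0 < e i)
    (hassoc : ∀ i j, i ≠ j → ¬ Associated (qi i) (qi j))
    (hfac : q = c * ∏ i, qi i ^ e i) :
    ∃ P : Finset (Fin m) → MvPolynomial (Fin d) K,
      (∀ A, P A ≠ 0 →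
        ∃ x : Fin d → AlgebraicClosure K, ∀ i ∈ A,
          MvPolynomial.eval x
            (MvPolynomial.map (algebraMap K (AlgebraicClosure K)) (qi i)) = 0) ∧
      algebraMap (MvPolynomial (Fin d) K) (FractionRing (MvPolynomial (Fin d) K)) p /
          algebraMap (MvPolynomial (Fin d) K) (FractionRing (MvPolynomial (Fin d) K)) q =
        ∑ A : Finset (Fin m),
          algebraMap (MvPolynomial (Fin d) K) (FractionRing (MvPolynomial (Fin d) K)) (P A) /
            algebraMap (MvPolynomial (Fin d) K) (FractionRing (MvPolynomial (Fin d) K))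
              (∏ i ∈ A, qi i ^ e i) := by
  set ι := algebraMap (MvPolynomial (Fin d) K) (FractionRing (MvPolynomial (Fin d) K)) with hι
  have hne : ∀ r : MvPolynomial (Fin d) K, r ≠ 0 → ι r ≠ 0 := fun r hr h =>
    hr ((IsFractionRing.to_map_eq_zero_iff
      (K := FractionRing (MvPolynomial (Fin d) K))).mp h)
  have hprodne : (∏ i, qi i ^ e i) ≠ 0 :=
    Finset.prod_ne_zero_iff.mpr fun i _ => pow_ne_zero _ (hirr i).ne_zero
  obtain ⟨u, hu⟩ := hc
  obtain ⟨P, hPgood, hPeq⟩ := decomp_aux qi e hirr he Finset.univ (↑u⁻¹ * p)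
  refine ⟨P, hPgood, ?_⟩
  rw [← hPeq]
  rw [div_eq_div_iff (hne _ hq) (hne _ hprodne), ← map_mul, ← map_mul]
  congr 1
  rw [hfac, ← hu]
  have h1 : (↑u⁻¹ : MvPolynomial (Fin d) K) * ↑u = 1 := by
    rw [← Units.val_mul, inv_mul_cancel, Units.val_one]
  calc p * ∏ i, qi i ^ e i
      = (↑u⁻¹ * ↑u) * (p * ∏ i, qi i ^ e i) := by rw [h1, one_mul]
    _ = ↑u⁻¹ * p * (↑u * ∏ i, qi i ^ e i) := by ring
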